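/- Let z, w, u ∈ ℝ² be pairwise distinct. Then ⟨(z−w)/|z−w|², (z−u)/|z−u|²⟩ − ⟨(z−w)/|z−w|², (w−u)/|w−u|²⟩ − ⟨(z−u)/|z−u|², (u−w)/|u−w|²⟩ = 2(|z−w|²·|z−u|² − ⟨z−w, z−u⟩²) / (|z−w|²·|z−u|²·|w−u|²). (The right-hand side equals 2/D²(z−w, z−u), where D(ξ,η) denotes the diameter of the circumcircle of the triangle with vertices 0, ξ, η in ℝ².) -/

import Mathlib

open RealInnerProductSpace

theorem circumcircle_aux (A B C t : ℝ) (hA : A ≠ 0) (hB : B ≠ 0) (hC : C ≠ 0)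
    (h : C = B - 2 * t + A) :
    A⁻¹ * (B⁻¹ * t) - A⁻¹ * (C⁻¹ * (t - A)) - B⁻¹ * (C⁻¹ * (t - B))
      = 2 * (A * B - t ^ 2) / (A * B * C) := by
  field_simp
  subst h
  ring

/-- The pointwise circumcircle identity (Lemma 9.1 of the paper): for pairwise distinct
`z, w, u ∈ ℝ²`, the combination of inner products of normalized differences equals
`2 / D²(z − w, z − u)` where `D` is the circumcircle diameter. -/
theorem circumcircle_identity (z w u : EuclideanSpace ℝ (Fin 2))
    (hzw : z ≠ w) (hzu : z ≠ u) (hwu : w ≠ u) :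
    ⟪(‖z - w‖ ^ 2)⁻¹ • (z - w), (‖z - u‖ ^ 2)⁻¹ • (z - u)⟫
      - ⟪(‖z - w‖ ^ 2)⁻¹ • (z - w), (‖w - u‖ ^ 2)⁻¹ • (w - u)⟫
      - ⟪(‖z - u‖ ^ 2)⁻¹ • (z - u), (‖u - w‖ ^ 2)⁻¹ • (u - w)⟫
    = 2 * (‖z - w‖ ^ 2 * ‖z - u‖ ^ 2 - ⟪z - w, z - u⟫ ^ 2)
        / (‖z - w‖ ^ 2 * ‖z - u‖ ^ 2 * ‖w - u‖ ^ 2) := by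
  set a := z - w with ha
  set b := z - u with hb
  have hwu' : w - u = b - a := by rw [ha, hb]; abel
  have huw : u - w = a - b := by rw [ha, hb]; abel
  have hA : (‖a‖ : ℝ) ^ 2 ≠ 0 := by
    simpa using pow_ne_zero 2 (norm_ne_zero_iff.mpr (sub_ne_zero.mpr hzw))
  have hB : (‖b‖ : ℝ) ^ 2 ≠ 0 := by
    simpa using pow_ne_zero 2 (norm_ne_zero_iff.mpr (sub_ne_zero.mpr hzu))
  have hC : (‖b - a‖ : ℝ) ^ 2 ≠ 0 := by
    rw [← hwu']
    simpa using pow_ne_zero 2 (norm_ne_zero_iff.mpr (sub_ne_zero.mpr hwu))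
  have hCval : ‖b - a‖ ^ 2 = ‖b‖ ^ 2 - 2 * ⟪a, b⟫ + ‖a‖ ^ 2 := by
    rw [norm_sub_sq_real, real_inner_comm a b]
  have hia : ⟪a, a⟫ = ‖a‖ ^ 2 := real_inner_self_eq_norm_sq a
  have hib : ⟪b, b⟫ = ‖b‖ ^ 2 := real_inner_self_eq_norm_sq b
  have hnuw : ‖a - b‖ = ‖b - a‖ := norm_sub_rev a b
  rw [hwu', huw, hnuw]
  simp only [real_inner_smul_left, real_inner_smul_right, inner_sub_right, hia, hib]
  rw [real_inner_comm a b]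
  generalize ⟪a, b⟫ = t at hCval ⊢
  generalize ‖a‖ ^ 2 = A at hA hCval ⊢
  generalize ‖b‖ ^ 2 = B at hB hCval ⊢
  generalize ‖b - a‖ ^ 2 = C at hC hCval ⊢
  field_simp
  subst hCval
  ring
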